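/- Let v be a leaf of a finite tree T with at least 2 vertices, and let u be the neighbor of v. Then μ(T; v) ≥ μ(T; u), with equality if and only if T is a path. -/

import Mathlib

open Finset Polynomial

variable {V : Type*}

/-- The vertex sets of the subtrees of `G` that lie inside the set `S` and contain
the vertex `w` : nonempty connected induced subgraphs. -/
noncomputable def subtreesIn [Fintype V] [DecidableEq V] (G : SimpleGraph V) (S : Set V)
    (w : V) : Finset (Finset V) := by
  classical
  exact Finset.univ.filter fun A => w ∈ A ∧ (A : Set V) ⊆ S ∧ (G.induce (A : Set V)).Connected

/-- The vertex sets of the subtrees of `G` containing `w`. -/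
noncomputable def subtrees [Fintype V] [DecidableEq V] (G : SimpleGraph V) (w : V) :
    Finset (Finset V) := subtreesIn G Set.univ w

/-- The generating polynomial `φ_{T,w}` of subtrees of `G` inside `S` containing `w`,
counted by order. -/
noncomputable def subtreePolyIn [Fintype V] [DecidableEq V] (G : SimpleGraph V) (S : Set V)
    (w : V) : Polynomial ℝ := ∑ A ∈ subtreesIn G S w, X ^ A.card

/-- The generating polynomial `φ_{T,w}` of subtrees of `G` containing `w`. -/
noncomputable def subtreePoly [Fintype V] [DecidableEq V] (G : SimpleGraph V) (w : V) :
    Polynomial ℝ := subtreePolyIn G Set.univ w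

/-- The local mean subtree order `μ(G; w)`: the average order of subtrees of `G`
containing `w`. -/
noncomputable def meanOrder [Fintype V] [DecidableEq V] (G : SimpleGraph V) (w : V) : ℝ :=
  (∑ A ∈ subtrees G w, (A.card : ℝ)) / ((subtrees G w).card : ℝ)

/-- The vertex set of the connected component of `G - D` containing `w`. -/
def compDel (G : SimpleGraph V) (D : Set V) (w : V) : Set V :=
  {x | ∃ p : G.Walk w x, ∀ y ∈ p.support, y ∉ D}

/-- The neighbours of `u` as a `Finset`. -/
noncomputable def nbrFinset [Fintype V] (G : SimpleGraph V) (u : V) : Finset V := by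
  classical
  exact Finset.univ.filter fun w => G.Adj u w

/-- `G` is a path: a tree all of whose vertices have degree at most `2`. -/
def IsPathGraph [Fintype V] (G : SimpleGraph V) : Prop :=
  G.IsTree ∧ ∀ v : V, (G.neighborSet v).ncard ≤ 2

/-- The induced subgraph of `G` on `S` is a path (as a subgraph of a tree:
connected with all degrees within `S` at most `2`). -/
def IsPathOn (G : SimpleGraph V) (S : Set V) : Prop :=
  (G.induce S).Connected ∧ ∀ x ∈ S, (G.neighborSet x ∩ S).ncard ≤ 2

/-- The partial Kelmans operation on `G` from `v` to `u`, moving the edges between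
`v` and the set `W`: each edge `v w`, `w ∈ W`, is replaced by the edge `u w`. -/
def pkelmans (G : SimpleGraph V) (v u : V) (W : Set V) : SimpleGraph V :=
  SimpleGraph.fromRel fun a b =>
    (G.Adj a b ∧ ¬(a = v ∧ b ∈ W) ∧ ¬(b = v ∧ a ∈ W)) ∨
    (a = u ∧ b ∈ W ∧ G.Adj v b)

/-- The Kelmans operation on `G` from `v` to `u`: every edge `v w` with
`w ∈ N(v) \ {u}` is replaced by the edge `u w`. -/
def kelmans (G : SimpleGraph V) (v u : V) : SimpleGraph V :=
  pkelmans G v u (G.neighborSet v \ {u})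

set_option linter.unusedSectionVars false

section Aux
variable {V : Type*} [DecidableEq V] {G : SimpleGraph V}

def Conn (G : SimpleGraph V) (A : Finset V) : Prop :=
  A.Nonempty ∧ ∀ a ∈ A, ∀ b ∈ A, ∃ p : G.Walk a b, ∀ x ∈ p.support, x ∈ A

lemma walk_induce {A : Finset V} :
    ∀ {a b : V} (p : G.Walk a b) (hs : ∀ x ∈ p.support, x ∈ A),
    (G.induce (A : Set V)).Reachable ⟨a, by simpa using hs a p.start_mem_support⟩
      ⟨b, by simpa using hs b p.end_mem_support⟩ := by
  intro a b p
  induction p with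
  | nil => intro hs; rfl
  | cons h p ih =>
    intro hs
    refine SimpleGraph.Reachable.trans (SimpleGraph.Adj.reachable ?_) (ih fun x hx => hs x (by simp [hx]))
    exact h

lemma conn_iff (G : SimpleGraph V) (A : Finset V) :
    (G.induce (A : Set V)).Connected ↔ Conn G A := by
  constructor
  · intro hc
    have hp := hc.preconnected
    have hne := hc.nonempty
    have hA : A.Nonempty := by
      obtain ⟨⟨x, hx⟩⟩ := hne
      exact ⟨x, by simpa using hx⟩
    refine ⟨hA, fun a ha b hb => ?_⟩
    obtain ⟨q⟩ := hp ⟨a, by simpa using ha⟩ ⟨b, by simpa using hb⟩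
    let emb : G.induce (A : Set V) ↪g G := SimpleGraph.Embedding.induce (A : Set V)
    refine ⟨q.map emb.toHom, ?_⟩
    intro x hx
    replace hx : x ∈ q.support.map emb.toHom := by
      rw [← SimpleGraph.Walk.support_map]; exact hx
    obtain ⟨⟨y, hy⟩, _, rfl⟩ := List.mem_map.mp hx
    exact (show y ∈ A by simpa using hy)
  · rintro ⟨hA, h⟩
    obtain ⟨a, ha⟩ := hA
    have : Nonempty (A : Set V) := ⟨⟨a, by simpa using ha⟩⟩
    refine SimpleGraph.Connected.mk (fun x y => ?_)
    obtain ⟨x, hx⟩ := x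
    obtain ⟨y, hy⟩ := y
    obtain ⟨p, hp⟩ := h x (by simpa using hx) y (by simpa using hy)
    exact walk_induce p hp


lemma conn_of_base {A : Finset V} {c : V} (hc : c ∈ A)
    (h : ∀ b ∈ A, ∃ p : G.Walk c b, ∀ x ∈ p.support, x ∈ A) : Conn G A := by
  refine ⟨⟨c, hc⟩, fun a ha b hb => ?_⟩
  obtain ⟨p, hp⟩ := h a ha
  obtain ⟨q, hq⟩ := h b hb
  refine ⟨p.reverse.append q, fun x hx => ?_⟩
  rw [SimpleGraph.Walk.mem_support_append_iff] at hx
  rcases hx with hx | hx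
  · exact hp x (by simpa using hx)
  · exact hq x hx

lemma conn_singleton (G : SimpleGraph V) (x : V) : Conn G {x} :=
  conn_of_base (Finset.mem_singleton_self x)
    (fun b hb => by
      rw [Finset.mem_singleton] at hb
      subst hb
      exact ⟨SimpleGraph.Walk.nil, by simp⟩)

lemma conn_insert {A : Finset V} {y x : V} (hA : Conn G A) (hy : y ∈ A)
    (hadj : G.Adj y x) : Conn G (insert x A) := by
  refine conn_of_base (A := insert x A) (c := y) (by simp [hy]) (fun b hb => ?_)
  rw [Finset.mem_insert] at hb
  rcases hb with rfl | hb
  · exact ⟨SimpleGraph.Walk.cons hadj SimpleGraph.Walk.nil, by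
      intro z hz; simp at hz; rcases hz with rfl | rfl <;> simp [hy]⟩
  · obtain ⟨p, hp⟩ := hA.2 y hy b hb
    exact ⟨p, fun z hz => by simp [hp z hz]⟩

/-- purge a vertex `v` whose only neighbour is `u` from a walk avoiding it at endpoints -/
lemma purge_aux {v u : V} (hN : ∀ z, G.Adj v z → z = u) {A : Finset V} :
    ∀ (n : ℕ) {x b : V} (p : G.Walk x b), p.length ≤ n → x ≠ v → b ≠ v →
    (∀ y ∈ p.support, y ∈ A) →
    ∃ q : G.Walk x b, ∀ y ∈ q.support, y ∈ A.erase v := by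
  intro n
  induction n using Nat.strong_induction_on with
  | _ n ih =>
  intro x b p hl hx hb hsupp
  cases p with
  | nil => exact ⟨SimpleGraph.Walk.nil, by simp [hx, hsupp x (by simp)]⟩
  | @cons _ y _ h p' =>
    by_cases hyv : y = v
    · subst hyv
      have hxu : x = u := hN x h.symm
      cases p' with
      | nil => exact absurd rfl hb
      | @cons _ z _ h2 p'' =>
        have hzu : z = u := hN z h2
        subst hzu; subst hxu
        have hlen : p''.length < n := by simp at hl; omega
        refine ih p''.length hlen p'' le_rfl (fun h' => ?_) hb
          (fun w hw => hsupp w (by simp [hw]))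
        exact (G.irrefl (h' ▸ h))
    · have hlen : p'.length < n := by simp at hl; omega
      obtain ⟨q', hq'⟩ := ih p'.length hlen p' le_rfl hyv hb
        (fun w hw => hsupp w (by simp [hw]))
      refine ⟨SimpleGraph.Walk.cons h q', fun w hw => ?_⟩
      simp at hw
      rcases hw with rfl | hw
      · exact Finset.mem_erase.mpr ⟨hx, hsupp w (by simp)⟩
      · exact hq' w hw

lemma conn_erase {v u : V} (hN : ∀ z, G.Adj v z → z = u) {A : Finset V}
    (hA : Conn G A) (hu : u ∈ A) (huv : u ≠ v) : Conn G (A.erase v) := by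
  refine conn_of_base (c := u) (Finset.mem_erase.mpr ⟨huv, hu⟩) (fun b hb => ?_)
  obtain ⟨hbv, hbA⟩ := Finset.mem_erase.mp hb
  obtain ⟨p, hp⟩ := hA.2 u hu b hbA
  exact purge_aux hN p.length p le_rfl huv hbv hp

lemma cross {A S : Finset V} :
    ∀ {a s : V} (p : G.Walk a s), a ∈ A → s ∉ A → (∀ x ∈ p.support, x ∈ S) →
    ∃ y x, y ∈ A ∧ x ∈ S ∧ x ∉ A ∧ G.Adj y x := by
  intro a s p
  induction p with
  | nil => intro ha hs _; exact absurd ha hs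
  | @cons a y _ h p' ih =>
    intro ha hs hsupp
    by_cases hyA : y ∈ A
    · exact ih hyA hs (fun x hx => hsupp x (by simp [hx]))
    · exact ⟨a, y, ha, hsupp y (by simp), hyA, h⟩

lemma chain_exists {S : Finset V} {u : V} (hS : Conn G S) (hu : u ∈ S) :
    ∀ k : ℕ, 1 ≤ k → k ≤ S.card → ∃ A : Finset V, A ⊆ S ∧ u ∈ A ∧ Conn G A ∧ A.card = k := by
  intro k
  induction k with
  | zero => omega
  | succ k ih =>
    intro _ hk
    rcases Nat.eq_or_lt_of_le (Nat.one_le_iff_ne_zero.mpr (by omega) : 1 ≤ k + 1) with h1 | h1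
    · exact ⟨{u}, by simp [hu], by simp, conn_singleton G u, by simp [← h1]⟩
    · have hk1 : 1 ≤ k := by omega
      obtain ⟨A, hAS, huA, hAc, hcard⟩ := ih hk1 (by omega)
      have hne : ∃ s ∈ S, s ∉ A := by
        by_contra hcon
        push_neg at hcon
        have : S ⊆ A := hcon
        have := Finset.card_le_card this
        omega
      obtain ⟨s, hsS, hsA⟩ := hne
      obtain ⟨p, hp⟩ := hS.2 u hu s hsS
      obtain ⟨y, x, hyA, hxS, hxA, hadj⟩ := cross p huA hsA hp
      exact ⟨insert x A, Finset.insert_subset hxS hAS, by simp [huA],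
        conn_insert hAc hyA hadj, by rw [Finset.card_insert_of_notMem hxA]; omega⟩

lemma deg2_unique [Fintype V] (hdeg : ∀ w : V, (G.neighborSet w).ncard ≤ 2)
    {c f a b : V} (hf : G.Adj c f) (ha : G.Adj c a) (hb : G.Adj c b)
    (haf : a ≠ f) (hbf : b ≠ f) : a = b := by
  by_contra hab
  have hsub : ({f, a, b} : Set V) ⊆ G.neighborSet c := by
    intro z hz
    rcases hz with rfl | rfl | rfl
    exacts [hf, ha, hb]
  have h3 : ({f, a, b} : Set V).ncard = 3 := by
    rw [Set.ncard_insert_of_notMem (by simp [Ne.symm haf, Ne.symm hbf]) (Set.toFinite _),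
      Set.ncard_pair hab]
  have := Set.ncard_le_ncard hsub (Set.toFinite _)
  rw [h3] at this
  exact absurd (this.trans (hdeg c)) (by norm_num)

lemma comp2 [Fintype V] (hdeg : ∀ w : V, (G.neighborSet w).ncard ≤ 2) :
    ∀ (n : ℕ) {c f x y : V} (p : G.Walk c x) (q : G.Walk c y),
    p.length + q.length ≤ n → G.Adj c f → p.IsPath → q.IsPath →
    f ∉ p.support → f ∉ q.support →
    (p.support ⊆ q.support ∨ q.support ⊆ p.support) := by
  intro n
  induction n using Nat.strong_induction_on with
  | _ n ih =>
  intro c f x y p q hl hcf hp hq hfp hfq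
  cases p with
  | nil =>
    left
    intro z hz
    simp at hz
    subst hz
    exact q.start_mem_support
  | @cons _ a _ ha p' =>
    cases q with
    | nil =>
      right
      intro z hz
      simp at hz
      subst hz
      exact SimpleGraph.Walk.start_mem_support _
    | @cons _ b _ hb q' =>
      have haf : a ≠ f := fun h => hfp (by subst h; simp)
      have hbf : b ≠ f := fun h => hfq (by subst h; simp)
      have hab : a = b := deg2_unique hdeg hcf ha hb haf hbf
      subst hab
      have hp' := (SimpleGraph.Walk.cons_isPath_iff ha p').mp hp
      have hq' := (SimpleGraph.Walk.cons_isPath_iff hb q').mp hq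
      have hrec := ih (p'.length + q'.length) (by simp at hl; omega) p' q' le_rfl
        ha.symm hp'.1 hq'.1 hp'.2 hq'.2
      rcases hrec with h | h
      · left
        intro z hz
        simp at hz ⊢
        rcases hz with rfl | hz
        · left; rfl
        · right; exact h hz
      · right
        intro z hz
        simp at hz ⊢
        rcases hz with rfl | hz
        · left; rfl
        · right; exact h hz

lemma conn_is_path_support [Fintype V] (hdeg : ∀ w : V, (G.neighborSet w).ncard ≤ 2)
    {u v : V} (huv : G.Adj u v) {A : Finset V} (hA : Conn G A) (hu : u ∈ A)
    (hv : v ∉ A) : ∃ (x : V) (p : G.Walk u x), p.IsPath ∧ ∀ b, (b ∈ A ↔ b ∈ p.support) := by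
  have hpaths : ∀ b ∈ A, ∃ p : G.Walk u b, p.IsPath ∧ ∀ z ∈ p.support, z ∈ A := by
    intro b hb
    obtain ⟨w, hw⟩ := hA.2 u hu b hb
    exact ⟨w.toPath, w.toPath.2, fun z hz => hw z (SimpleGraph.Walk.support_toPath_subset w hz)⟩
  choose! f hf1 hf2 using hpaths
  have hattach : (A.attach).Nonempty := Finset.attach_nonempty_iff.mpr ⟨u, hu⟩
  obtain ⟨b₀, _, hmax⟩ := Finset.exists_max_image A.attach (fun b => (f b.1 b.2).length) hattach
  refine ⟨b₀.1, f b₀.1 b₀.2, hf1 _ _, fun b => ⟨fun hb => ?_, fun hb => hf2 _ b₀.2 b hb⟩⟩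
  have hcmp := comp2 hdeg ((f b hb).length + (f b₀.1 b₀.2).length) (f b hb) (f b₀.1 b₀.2)
    le_rfl huv (hf1 _ _) (hf1 _ _)
    (fun hmem => hv (hf2 _ hb _ hmem)) (fun hmem => hv (hf2 _ b₀.2 _ hmem))
  rcases hcmp with h | h
  · exact h ((f b hb).end_mem_support)
  · -- supp b₀ ⊆ supp b; use maximality to flip
    have hlen : (f b hb).length ≤ (f b₀.1 b₀.2).length := hmax ⟨b, hb⟩ (Finset.mem_attach _ _)
    have hnodupb := (hf1 b hb).support_nodup
    have hnodup0 := (hf1 b₀.1 b₀.2).support_nodup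
    have hsub : (f b₀.1 b₀.2).support.toFinset ⊆ (f b hb).support.toFinset := by
      intro z hz
      rw [List.mem_toFinset] at hz ⊢
      exact h hz
    have hcard : (f b hb).support.toFinset.card ≤ (f b₀.1 b₀.2).support.toFinset.card := by
      rw [List.toFinset_card_of_nodup hnodupb, List.toFinset_card_of_nodup hnodup0]
      simp only [SimpleGraph.Walk.length_support]
      omega
    have heq := Finset.eq_of_subset_of_card_le hsub hcard
    have : b ∈ (f b hb).support.toFinset := List.mem_toFinset.mpr ((f b hb).end_mem_support)
    rw [← heq, List.mem_toFinset] at this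
    exact this

lemma conn_card_inj [Fintype V] (hdeg : ∀ w : V, (G.neighborSet w).ncard ≤ 2)
    {u v : V} (huv : G.Adj u v) {A B : Finset V}
    (hA : Conn G A) (huA : u ∈ A) (hvA : v ∉ A)
    (hB : Conn G B) (huB : u ∈ B) (hvB : v ∉ B)
    (hcard : A.card = B.card) : A = B := by
  obtain ⟨x, p, hp, hpA⟩ := conn_is_path_support hdeg huv hA huA hvA
  obtain ⟨y, q, hq, hqB⟩ := conn_is_path_support hdeg huv hB huB hvB
  have hcmp := comp2 hdeg (p.length + q.length) p q le_rfl huv hp hq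
    (fun hm => hvA ((hpA v).mpr hm)) (fun hm => hvB ((hqB v).mpr hm))
  rcases hcmp with h | h
  · have hsub : A ⊆ B := fun z hz => (hqB z).mpr (h ((hpA z).mp hz))
    exact Finset.eq_of_subset_of_card_le hsub (le_of_eq hcard.symm)
  · have hsub : B ⊆ A := fun z hz => (hpA z).mpr (h ((hqB z).mp hz))
    exact (Finset.eq_of_subset_of_card_le hsub (le_of_eq hcard)).symm

lemma conn_support_toFinset {x y : V} (p : G.Walk x y) : Conn G p.support.toFinset := by
  refine conn_of_base (c := x) (List.mem_toFinset.mpr p.start_mem_support) (fun b hb => ?_)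
  rw [List.mem_toFinset] at hb
  refine ⟨p.takeUntil b hb, fun z hz => List.mem_toFinset.mpr ?_⟩
  exact p.support_takeUntil_subset hb hz

lemma loop_path_nil {x : V} (p : G.Walk x x) (hp : p.IsPath) : p.support = [x] := by
  cases p with
  | nil => simp
  | cons h p' =>
    rw [SimpleGraph.Walk.cons_isPath_iff] at hp
    exact absurd p'.end_mem_support hp.2

lemma not_path_two_subtrees [Fintype V] (hG : G.IsTree) {v u : V}
    (hN : ∀ z, G.Adj v z → z = u) (hv1 : (G.neighborSet v).ncard = 1) (huv : G.Adj v u)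
    {w : V} (hw : 3 ≤ (G.neighborSet w).ncard) :
    ∃ A B : Finset V, Conn G A ∧ u ∈ A ∧ v ∉ A ∧ Conn G B ∧ u ∈ B ∧ v ∉ B ∧
      A.card = B.card ∧ A ≠ B := by
  classical
  have hvu : v ≠ u := huv.ne
  set Nf : Finset V := Finset.univ.filter (fun z => G.Adj w z) with hNf
  have hNfcoe : (G.neighborSet w) = ↑Nf := by ext z; simp [hNf, SimpleGraph.neighborSet]
  have hNfcard : 3 ≤ Nf.card := by rwa [hNfcoe, Set.ncard_coe_finset] at hw
  by_cases hwu : w = u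
  · subst hwu
    -- w = u : pick two neighbours of u other than v
    have hcard2 : 2 ≤ (Nf.erase v).card := by
      have := Finset.card_erase_of_mem (show v ∈ Nf by simp [hNf, huv.symm])
      omega
    obtain ⟨a, ha, b, hb, hab⟩ := Finset.one_lt_card.mp (by omega : 1 < (Nf.erase v).card)
    obtain ⟨hav, haN⟩ := Finset.mem_erase.mp ha
    obtain ⟨hbv, hbN⟩ := Finset.mem_erase.mp hb
    have hadja : G.Adj w a := by simpa [hNf] using haN
    have hadjb : G.Adj w b := by simpa [hNf] using hbN
    refine ⟨insert a {w}, insert b {w}, conn_insert (conn_singleton G w) (by simp) hadja,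
      by simp, ?_, conn_insert (conn_singleton G w) (by simp) hadjb, by simp, ?_, ?_, ?_⟩
    · simp [Ne.symm hav, hvu]
    · simp [Ne.symm hbv, hvu]
    · rw [Finset.card_insert_of_notMem (by simp [hadja.ne']),
        Finset.card_insert_of_notMem (by simp [hadjb.ne'])]
    · intro h
      have : a ∈ insert b ({w} : Finset V) := h ▸ Finset.mem_insert_self a {w}
      simp [hab, hadja.ne'] at this
  · -- w ≠ u
    obtain ⟨p0⟩ := hG.isConnected.preconnected u w
    set pth : G.Walk u w := (p0.toPath : G.Walk u w) with hpthdef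
    have hpthP : pth.IsPath := p0.toPath.2
    have hvw : v ≠ w := by rintro rfl; rw [hv1] at hw; omega
    have hvsup : v ∉ pth.support := by
      intro hvp
      have hspec := pth.take_spec hvp
      have hsupp : pth.support =
          (pth.takeUntil v hvp).support ++ (pth.dropUntil v hvp).support.tail := by
        rw [← SimpleGraph.Walk.support_append, hspec]
      have hnodup := hpthP.support_nodup
      rw [hsupp, List.nodup_append] at hnodup
      have hu1 : u ∈ (pth.takeUntil v hvp).support := SimpleGraph.Walk.start_mem_support _
      have hu2 : u ∈ (pth.dropUntil v hvp).support.tail := by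
        obtain ⟨z, hadj, q', hq'⟩ :=
          SimpleGraph.Walk.exists_eq_cons_of_ne hvw (pth.dropUntil v hvp)
        have hz : z = u := hN _ hadj
        rw [hq']
        simp only [SimpleGraph.Walk.support_cons, List.tail_cons]
        exact hz ▸ q'.start_mem_support
      exact hnodup.2.2 u hu1 u hu2 rfl
    -- any neighbour of w on pth is the penultimate vertex
    have huniq : ∀ a, G.Adj w a → a ∈ pth.support →
        some a = pth.support.dropLast.getLast? := by
      intro a hadj hmem
      have haw : a ≠ w := hadj.ne'
      set t := pth.takeUntil a hmem with ht
      set r := pth.dropUntil a hmem with hr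
      have hrP : r.IsPath := hpthP.dropUntil hmem
      have he : (SimpleGraph.Walk.cons hadj.symm SimpleGraph.Walk.nil : G.Walk a w).IsPath := by
        rw [SimpleGraph.Walk.cons_isPath_iff]
        exact ⟨SimpleGraph.Walk.IsPath.nil, by simp [haw]⟩
      have hEq : (⟨r, hrP⟩ : G.Path a w) = ⟨_, he⟩ :=
        hG.IsAcyclic.path_unique _ _
      have hrsupp : r.support = [a, w] := by
        have := congrArg (fun q : G.Path a w => (q : G.Walk a w).support) hEq
        simpa using this
      have hsupp : pth.support = t.support ++ [w] := by
        rw [← pth.take_spec hmem, SimpleGraph.Walk.support_append, hrsupp]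
        rfl
      have hdl : pth.support.dropLast = t.support := by
        rw [hsupp]
        simpa using List.dropLast_concat (l := t.support) (b := w)
      rw [hdl, List.getLast?_eq_getLast (l := t.support) (by simp), SimpleGraph.Walk.getLast_support]
    have hvN : v ∉ Nf := by
      simp only [hNf, Finset.mem_filter]
      rintro ⟨-, hadj⟩
      exact hwu (hN w hadj.symm)
    set S := Nf.filter (fun z => z ∈ pth.support) with hS
    have hS1 : S.card ≤ 1 := by
      refine Finset.card_le_one.mpr (fun a ha b hb => ?_)
      rw [hS, Finset.mem_filter] at ha hb
      have h1 := huniq a (by simpa [hNf] using ha.1) ha.2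
      have h2 := huniq b (by simpa [hNf] using hb.1) hb.2
      rw [← h2] at h1
      exact Option.some_injective _ h1
    have hT2 : 2 ≤ (Nf \ S).card := by
      have hsub : S ⊆ Nf := by rw [hS]; exact Finset.filter_subset _ _
      have := Finset.card_sdiff_of_subset hsub
      omega
    obtain ⟨a, ha, b, hb, hab⟩ := Finset.one_lt_card.mp (by omega : 1 < (Nf \ S).card)
    obtain ⟨haN, haS⟩ := Finset.mem_sdiff.mp ha
    obtain ⟨hbN, hbS⟩ := Finset.mem_sdiff.mp hb
    have hadja : G.Adj w a := by simpa [hNf] using haN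
    have hadjb : G.Adj w b := by simpa [hNf] using hbN
    have hasup : a ∉ pth.support := fun h => haS (by rw [hS, Finset.mem_filter]; exact ⟨haN, h⟩)
    have hbsup : b ∉ pth.support := fun h => hbS (by rw [hS, Finset.mem_filter]; exact ⟨hbN, h⟩)
    set P := pth.support.toFinset with hP
    have hwP : w ∈ P := List.mem_toFinset.mpr pth.end_mem_support
    have huP : u ∈ P := List.mem_toFinset.mpr pth.start_mem_support
    have hvP : v ∉ P := fun h => hvsup (List.mem_toFinset.mp h)
    have haP : a ∉ P := fun h => hasup (List.mem_toFinset.mp h)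
    have hbP : b ∉ P := fun h => hbsup (List.mem_toFinset.mp h)
    have hav : a ≠ v := fun h => hvN (h ▸ haN)
    have hbv : b ≠ v := fun h => hvN (h ▸ hbN)
    refine ⟨insert a P, insert b P, conn_insert (conn_support_toFinset pth) hwP hadja,
      by simp [huP], ?_, conn_insert (conn_support_toFinset pth) hwP hadjb,
      by simp [huP], ?_, ?_, ?_⟩
    · simp [Ne.symm hav, hvP]
    · simp [Ne.symm hbv, hvP]
    · rw [Finset.card_insert_of_notMem haP, Finset.card_insert_of_notMem hbP]
    · intro h
      have : a ∈ insert b P := h ▸ Finset.mem_insert_self a P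
      rcases Finset.mem_insert.mp this with h' | h'
      · exact hab h'
      · exact haP h'

lemma gauss_icc : ∀ n : ℕ, 2 * ∑ k ∈ Finset.Icc 1 n, k = n * (n+1) := by
  intro n
  induction n with
  | zero => simp
  | succ n ih =>
    rw [Finset.sum_Icc_succ_top (by omega : 1 ≤ n + 1), Nat.mul_add, ih]
    ring

lemma count_lemma : ∀ (n : ℕ) (m : ℕ → ℕ), (∀ k ∈ Finset.Icc 1 n, 1 ≤ m k) →
    (2 * ∑ k ∈ Finset.Icc 1 n, k * m k ≤
      (∑ k ∈ Finset.Icc 1 n, m k) * ((∑ k ∈ Finset.Icc 1 n, m k) + 1)) ∧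
    (2 * ∑ k ∈ Finset.Icc 1 n, k * m k =
      (∑ k ∈ Finset.Icc 1 n, m k) * ((∑ k ∈ Finset.Icc 1 n, m k) + 1) →
      ∀ k ∈ Finset.Icc 1 n, m k = 1) := by
  intro n
  induction n with
  | zero => intro m _; simp
  | succ n ih =>
    intro m hm
    have hsub : Finset.Icc 1 n ⊆ Finset.Icc 1 (n+1) := by
      apply Finset.Icc_subset_Icc_right; omega
    have hm' : ∀ k ∈ Finset.Icc 1 n, 1 ≤ m k := fun k hk => hm k (hsub hk)
    obtain ⟨ih1, ih2⟩ := ih m hm'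
    set S := ∑ k ∈ Finset.Icc 1 n, k * m k with hSdef
    set M := ∑ k ∈ Finset.Icc 1 n, m k with hMdef
    set c := m (n+1) with hcdef
    have hc : 1 ≤ c := hm (n+1) (by simp)
    have hMn : n ≤ M := by
      calc n = ∑ _k ∈ Finset.Icc 1 n, 1 := by simp
      _ ≤ M := Finset.sum_le_sum hm'
    have hr1 : ∑ k ∈ Finset.Icc 1 (n+1), k * m k = S + (n+1) * c :=
      Finset.sum_Icc_succ_top (by omega) _
    have hr2 : ∑ k ∈ Finset.Icc 1 (n+1), m k = M + c :=
      Finset.sum_Icc_succ_top (by omega) _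
    have expand : (M+c)*((M+c)+1) = M*(M+1) + c*(2*M+c+1) := by ring
    have key : 2*((n+1)*c) ≤ c*(2*M+c+1) := by
      calc 2*((n+1)*c) = (2*(n+1)) * c := by ring
      _ ≤ (2*M+c+1) * c := Nat.mul_le_mul_right c (by omega)
      _ = c*(2*M+c+1) := by ring
    constructor
    · rw [hr1, hr2, expand]
      calc 2 * (S + (n+1)*c) = 2*S + 2*((n+1)*c) := by ring
      _ ≤ M*(M+1) + c*(2*M+c+1) := Nat.add_le_add ih1 key
    · rw [hr1, hr2, expand]
      intro hEq
      have h2 : 2*S + 2*((n+1)*c) = M*(M+1) + c*(2*M+c+1) := by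
        rw [← hEq]; ring
      have e1 : 2*S = M*(M+1) := by omega
      have e2 : 2*((n+1)*c) = c*(2*M+c+1) := by omega
      have hall := ih2 e1
      have hMeq : M = n := by
        rw [hMdef]
        calc ∑ k ∈ Finset.Icc 1 n, m k = ∑ _k ∈ Finset.Icc 1 n, 1 :=
          Finset.sum_congr rfl (fun k hk => hall k hk)
        _ = n := by simp
      have hc1 : c = 1 := by
        have : c * (2*(n+1)) = c * (2*M+c+1) := by rw [← e2]; ring
        have := Nat.eq_of_mul_eq_mul_left (by omega : 0 < c) this
        omega
      intro k hk
      rw [Finset.mem_Icc] at hk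
      by_cases hkn : k = n + 1
      · rw [hkn, ← hcdef]; exact hc1
      · exact hall k (Finset.mem_Icc.mpr (by omega))

lemma mem_subtrees [Fintype V] [DecidableEq V] (G : SimpleGraph V) (w : V) (A : Finset V) :
    A ∈ subtrees G w ↔ w ∈ A ∧ Conn G A := by
  simp only [subtrees, subtreesIn, Finset.mem_filter, Finset.mem_univ, true_and,
    Set.subset_univ]
  exact and_congr_right (fun _ => conn_iff G A)


end Aux

/-- If `v` is a leaf of a tree `T` with neighbour `u`, then
`μ(T; v) ≥ μ(T; u)`, with equality iff `T` is a path. -/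
theorem leaf_meanOrder_ge {V : Type*} [Fintype V] [DecidableEq V]
    (G : SimpleGraph V) (hG : G.IsTree) (v u : V) (hv : (G.neighborSet v).ncard = 1)
    (huv : G.Adj v u) :
    meanOrder G v ≥ meanOrder G u ∧ (meanOrder G v = meanOrder G u ↔ IsPathGraph G) := by
  classical
  have hvu : v ≠ u := huv.ne
  have hN : ∀ z, G.Adj v z → z = u := by
    obtain ⟨a, hA⟩ := Set.ncard_eq_one.mp hv
    have hau : a = u := by
      have : u ∈ G.neighborSet v := huv
      rw [hA] at this
      exact (Set.mem_singleton_iff.mp this).symm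
    intro z hz
    have : z ∈ G.neighborSet v := hz
    rw [hA, hau] at this
    exact this
  set 𝒜 : Finset (Finset V) := (subtrees G u).filter (fun A => v ∉ A) with h𝒜
  have hmem : ∀ A : Finset V, A ∈ 𝒜 ↔ u ∈ A ∧ Conn G A ∧ v ∉ A := by
    intro A
    rw [h𝒜, Finset.mem_filter, mem_subtrees]
    tauto
  have hconnuniv : Conn G Finset.univ := by
    refine ⟨⟨u, Finset.mem_univ u⟩, fun a _ b _ => ?_⟩
    obtain ⟨p⟩ := hG.isConnected.preconnected a b
    exact ⟨p, fun x _ => Finset.mem_univ x⟩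
  -- erase a member of a subtree through v
  have herase : ∀ A : Finset V, Conn G A → u ∈ A → A.erase v ∈ 𝒜 := by
    intro A hc hu
    rw [hmem]
    exact ⟨Finset.mem_erase.mpr ⟨Ne.symm hvu, hu⟩, conn_erase hN hc hu (Ne.symm hvu),
      Finset.notMem_erase v A⟩
  have hins : ∀ A ∈ 𝒜, Conn G (insert v A) := by
    intro A hA
    rw [hmem] at hA
    exact conn_insert hA.2.1 hA.1 huv.symm
  -- u belongs to any subtree containing v with another vertex
  have humem : ∀ A : Finset V, Conn G A → v ∈ A → A ≠ {v} → u ∈ A := by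
    intro A hc hvA hne
    have : ∃ b ∈ A, b ≠ v := by
      by_contra hcon
      push_neg at hcon
      exact hne (Finset.eq_singleton_iff_unique_mem.mpr ⟨hvA, hcon⟩)
    obtain ⟨b, hbA, hbv⟩ := this
    obtain ⟨p, hp⟩ := hc.2 v hvA b hbA
    obtain ⟨z, hadj, q, hq⟩ := SimpleGraph.Walk.exists_eq_cons_of_ne (Ne.symm hbv) p
    have hz : z = u := hN z hadj
    have : z ∈ p.support := by rw [hq]; simp
    exact hz ▸ hp z this
  -- structure of subtrees G u
  have hU : subtrees G u = 𝒜 ∪ 𝒜.image (insert v) := by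
    ext A
    rw [mem_subtrees, Finset.mem_union, Finset.mem_image]
    constructor
    · rintro ⟨huA, hc⟩
      by_cases hvA : v ∈ A
      · right
        refine ⟨A.erase v, herase A hc huA, ?_⟩
        rw [Finset.insert_erase hvA]
      · left; rw [hmem]; exact ⟨huA, hc, hvA⟩
    · rintro (hA | ⟨B, hB, rfl⟩)
      · rw [hmem] at hA; exact ⟨hA.1, hA.2.1⟩
      · have hB' := hB
        rw [hmem] at hB'
        exact ⟨Finset.mem_insert_of_mem hB'.1, hins B hB⟩
  -- structure of subtrees G v
  have hV : subtrees G v = insert {v} (𝒜.image (insert v)) := by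
    ext A
    rw [mem_subtrees, Finset.mem_insert, Finset.mem_image]
    constructor
    · rintro ⟨hvA, hc⟩
      by_cases hAv : A = {v}
      · left; exact hAv
      · right
        have huA := humem A hc hvA hAv
        refine ⟨A.erase v, herase A hc huA, Finset.insert_erase hvA⟩
    · rintro (rfl | ⟨B, hB, rfl⟩)
      · exact ⟨Finset.mem_singleton_self v, conn_singleton G v⟩
      · exact ⟨Finset.mem_insert_self v B, hins B hB⟩
  have hdisj : Disjoint 𝒜 (𝒜.image (insert v)) := by
    rw [Finset.disjoint_left]
    intro A hA hA2
    rw [Finset.mem_image] at hA2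
    obtain ⟨B, hB, rfl⟩ := hA2
    rw [hmem] at hA
    exact hA.2.2 (Finset.mem_insert_self v B)
  have hinj' : ∀ A ∈ 𝒜, ∀ B ∈ 𝒜, insert v A = insert v B → A = B := by
    intro A hA B hB hAB
    rw [hmem] at hA hB
    have : (insert v A).erase v = (insert v B).erase v := by rw [hAB]
    rwa [Finset.erase_insert hA.2.2, Finset.erase_insert hB.2.2] at this
  have hinj : Set.InjOn (insert v) (𝒜 : Set (Finset V)) :=
    fun A hA B hB hAB => hinj' A (Finset.mem_coe.mp hA) B (Finset.mem_coe.mp hB) hAB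
  have hsingleton : ({v} : Finset V) ∉ 𝒜.image (insert v) := by
    rw [Finset.mem_image]
    rintro ⟨B, hB, hBv⟩
    rw [hmem] at hB
    have : u ∈ ({v} : Finset V) := hBv ▸ Finset.mem_insert_of_mem hB.1
    exact hvu (Finset.mem_singleton.mp this).symm
  set M := 𝒜.card with hM
  set S₀ := ∑ A ∈ 𝒜, A.card with hS₀
  have hcardim : (𝒜.image (insert v)).card = M := Finset.card_image_of_injOn hinj
  have hcardinsert : ∀ A ∈ 𝒜, (insert v A).card = A.card + 1 := by
    intro A hA
    rw [hmem] at hA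
    exact Finset.card_insert_of_notMem hA.2.2
  have hsumim : ∑ A ∈ 𝒜.image (insert v), A.card = S₀ + M := by
    rw [Finset.sum_image hinj']
    rw [Finset.sum_congr rfl hcardinsert, Finset.sum_add_distrib]
    simp [hS₀, hM]
  have hcu : (subtrees G u).card = 2 * M := by
    rw [hU, Finset.card_union_of_disjoint hdisj, hcardim]
    omega
  have hsu : ∑ A ∈ subtrees G u, A.card = 2 * S₀ + M := by
    rw [hU, Finset.sum_union hdisj, hsumim]
    omega
  have hcv : (subtrees G v).card = M + 1 := by
    rw [hV, Finset.card_insert_of_notMem hsingleton, hcardim]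
  have hsv : ∑ A ∈ subtrees G v, A.card = S₀ + M + 1 := by
    rw [hV, Finset.sum_insert hsingleton, hsumim]
    simp
    omega
  have hM1 : 1 ≤ M := by
    rw [hM]
    refine Finset.card_pos.mpr ⟨{u}, ?_⟩
    rw [hmem]
    exact ⟨Finset.mem_singleton_self u, conn_singleton G u, by simp [hvu]⟩
  -- counting by fibres of the cardinality map
  set n' := (Finset.univ.erase v).card with hn'
  have hbound : ∀ A ∈ 𝒜, 1 ≤ A.card ∧ A.card ≤ n' := by
    intro A hA
    rw [hmem] at hA
    refine ⟨Finset.card_pos.mpr ⟨u, hA.1⟩, ?_⟩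
    refine Finset.card_le_card (fun x hx => Finset.mem_erase.mpr ⟨?_, Finset.mem_univ x⟩)
    rintro rfl
    exact hA.2.2 hx
  have hmaps : ∀ A ∈ 𝒜, A.card ∈ Finset.Icc 1 n' :=
    fun A hA => Finset.mem_Icc.mpr ⟨(hbound A hA).1, (hbound A hA).2⟩
  have hconnS : Conn G (Finset.univ.erase v) :=
    conn_erase hN hconnuniv (Finset.mem_univ u) (Ne.symm hvu)
  have huS : u ∈ Finset.univ.erase v := Finset.mem_erase.mpr ⟨Ne.symm hvu, Finset.mem_univ u⟩
  set m : ℕ → ℕ := fun k => (𝒜.filter (fun A => A.card = k)).card with hm_def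
  have hm1 : ∀ k ∈ Finset.Icc 1 n', 1 ≤ m k := by
    intro k hk
    rw [Finset.mem_Icc] at hk
    obtain ⟨A, hAS, huA, hAc, hcard⟩ := chain_exists hconnS huS k hk.1 hk.2
    refine Finset.card_pos.mpr ⟨A, Finset.mem_filter.mpr ⟨?_, hcard⟩⟩
    rw [hmem]
    exact ⟨huA, hAc, fun hvmem => absurd (hAS hvmem) (by simp)⟩
  have hMsum : M = ∑ k ∈ Finset.Icc 1 n', m k :=
    Finset.card_eq_sum_card_fiberwise hmaps
  have hSsum : S₀ = ∑ k ∈ Finset.Icc 1 n', k * m k := by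
    rw [hS₀, ← Finset.sum_fiberwise_of_maps_to hmaps (fun A => A.card)]
    refine Finset.sum_congr rfl (fun k hk => ?_)
    rw [Finset.sum_congr rfl (fun A hA => (Finset.mem_filter.mp hA).2),
      Finset.sum_const, smul_eq_mul, mul_comm]
  obtain ⟨hle, heqto⟩ := count_lemma n' m hm1
  have hineqN : 2 * S₀ ≤ M * (M + 1) := by rw [hSsum, hMsum]; exact hle
  -- real number expressions
  have hμv : meanOrder G v = ((S₀ : ℝ) + M + 1) / ((M : ℝ) + 1) := by
    rw [meanOrder]
    rw [show ∑ A ∈ subtrees G v, (A.card : ℝ) = ((∑ A ∈ subtrees G v, A.card : ℕ) : ℝ) by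
      rw [Nat.cast_sum]]
    rw [hsv, hcv]
    push_cast
    ring_nf
  have hμu : meanOrder G u = (2 * (S₀ : ℝ) + M) / (2 * (M : ℝ)) := by
    rw [meanOrder]
    rw [show ∑ A ∈ subtrees G u, (A.card : ℝ) = ((∑ A ∈ subtrees G u, A.card : ℕ) : ℝ) by
      rw [Nat.cast_sum]]
    rw [hsu, hcu]
    push_cast
    ring_nf
  have hMpos : (0 : ℝ) < M := by exact_mod_cast hM1
  have hcast : 2 * (S₀ : ℝ) ≤ (M : ℝ) * ((M : ℝ) + 1) := by exact_mod_cast hineqN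
  have hEqIff : (meanOrder G v = meanOrder G u) ↔ 2 * S₀ = M * (M + 1) := by
    rw [hμv, hμu, div_eq_div_iff (by linarith) (by linarith)]
    constructor
    · intro h
      have : (2 : ℝ) * S₀ = (M : ℝ) * ((M : ℝ) + 1) := by nlinarith [h]
      exact_mod_cast this
    · intro h
      have : (2 : ℝ) * S₀ = (M : ℝ) * ((M : ℝ) + 1) := by exact_mod_cast h
      nlinarith [this]
  constructor
  · -- the inequality
    rw [ge_iff_le, hμu, hμv, div_le_div_iff₀ (by linarith) (by linarith)]
    nlinarith [hcast, hMpos]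
  · rw [hEqIff]
    constructor
    · -- equality implies path
      intro hEq
      have hall : ∀ k ∈ Finset.Icc 1 n', m k = 1 := heqto (by rw [← hSsum, ← hMsum]; exact hEq)
      refine ⟨hG, fun w => ?_⟩
      by_contra hcon
      push_neg at hcon
      have hw3 : 3 ≤ (G.neighborSet w).ncard := hcon
      obtain ⟨A, B, hAc, huA, hvA, hBc, huB, hvB, hABcard, hABne⟩ :=
        not_path_two_subtrees hG hN hv huv hw3
      have hA𝒜 : A ∈ 𝒜 := (hmem A).mpr ⟨huA, hAc, hvA⟩
      have hB𝒜 : B ∈ 𝒜 := (hmem B).mpr ⟨huB, hBc, hvB⟩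
      set k := A.card with hk
      have hk1 : k ∈ Finset.Icc 1 n' := hmaps A hA𝒜
      have h2 : 2 ≤ m k := by
        rw [hm_def]
        have hsub : ({A, B} : Finset (Finset V)) ⊆ 𝒜.filter (fun C => C.card = k) := by
          intro C hC
          rcases Finset.mem_insert.mp hC with rfl | hC
          · exact Finset.mem_filter.mpr ⟨hA𝒜, rfl⟩
          · rw [Finset.mem_singleton] at hC
            subst hC
            exact Finset.mem_filter.mpr ⟨hB𝒜, hABcard.symm⟩
        have := Finset.card_le_card hsub
        rwa [Finset.card_insert_of_notMem (by simpa using hABne), Finset.card_singleton] at this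
      rw [hall k hk1] at h2
      omega
    · -- path implies equality
      rintro ⟨-, hdeg⟩
      have hmle : ∀ k, m k ≤ 1 := by
        intro k
        rw [hm_def]
        refine Finset.card_le_one.mpr (fun A hA B hB => ?_)
        rw [Finset.mem_filter, hmem] at hA hB
        exact conn_card_inj hdeg huv.symm hA.1.2.1 hA.1.1 hA.1.2.2
          hB.1.2.1 hB.1.1 hB.1.2.2 (hA.2.trans hB.2.symm)
      have hmeq : ∀ k ∈ Finset.Icc 1 n', m k = 1 :=
        fun k hk => le_antisymm (hmle k) (hm1 k hk)
      have hMn : M = n' := by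
        rw [hMsum, Finset.sum_congr rfl hmeq]
        simp
      have hSn : S₀ = ∑ k ∈ Finset.Icc 1 n', k := by
        rw [hSsum]
        exact Finset.sum_congr rfl (fun k hk => by rw [hmeq k hk, mul_one])
      rw [hSn, hMn, gauss_icc]
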